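/- Let G be a finite group and S_1,...,S_l irreducible representations. If the tuples (χ^{S_1}_C, ..., χ^{S_l}_C) are pairwise distinct as C ranges over the conjugacy classes of G, then the basis elements a_{S_1},...,a_{S_l} multiplicatively generate the fusion algebra R(G). -/

import Mathlib

open scoped Classical
open CategoryTheory

/-- The value `χ^W_C` of the character of `W` on (any element of) the conjugacy class `C`. -/
noncomputable def chiC {G : Type} [Group G] [Fintype G] (W : FDRep ℂ G) (C : ConjClasses G) : ℂ :=
  W.character (Quotient.out C)

/-- The fusion coefficient `N_{RS}^T = (1/|G|) ∑_g χ^R(g) χ^S(g) χ^T(g⁻¹)`. -/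
noncomputable def fusionN {G : Type} [Group G] [Fintype G] (R S T : FDRep ℂ G) : ℂ :=
  (Fintype.card G : ℂ)⁻¹ * ∑ g : G, R.character g * S.character g * T.character g⁻¹

/-- The multiplication of the fusion algebra `R(G)`, in coordinates with respect to the
basis `{a_R : R ∈ Irr(G)}` (indexed by `ι` via the family `V`). -/
noncomputable def fusionMul {G : Type} [Group G] [Fintype G] {ι : Type*} [Fintype ι]
    (V : ι → FDRep ℂ G) (x y : ι → ℂ) : ι → ℂ :=
  fun T => ∑ R, ∑ S, x R * y S * fusionN (V R) (V S) (V T)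

/-- The basis vector `a_R` of the fusion algebra, in coordinates. -/
noncomputable def fusBasis {ι : Type*} [DecidableEq ι] (R : ι) : ι → ℂ :=
  fun T => if T = R then 1 else 0


open CategoryTheory LinearMap Module MonoidalCategory
set_option linter.unusedSectionVars false


section Aux

variable {G : Type} [Group G] [Fintype G]
variable {M : Type} [AddCommGroup M] [Module ℂ M] [FiniteDimensional ℂ M]

lemma trace_decomp {p q : Submodule ℂ M} (h : IsCompl p q) (f : M →ₗ[ℂ] M)
    (hp : ∀ x ∈ p, f x ∈ p) (hq : ∀ x ∈ q, f x ∈ q) :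
    trace ℂ M f = trace ℂ p (f.restrict hp) + trace ℂ q (f.restrict hq) := by
  let e := Submodule.prodEquivOfIsCompl p q h
  have he : e.symm.conj f = LinearMap.prodMap (f.restrict hp) (f.restrict hq) := by
    apply LinearMap.ext; rintro ⟨x, y⟩
    simp only [LinearEquiv.conj_apply, LinearMap.comp_apply, LinearEquiv.coe_coe,
      LinearMap.prodMap_apply, LinearEquiv.symm_symm]
    rw [LinearEquiv.symm_apply_eq]
    show f (e (x, y)) = e (f.restrict hp x, f.restrict hq y)
    rw [Submodule.coe_prodEquivOfIsCompl', Submodule.coe_prodEquivOfIsCompl']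
    simp [LinearMap.restrict_apply, map_add]
  calc trace ℂ M f = trace ℂ (↥p × ↥q) (e.symm.conj f) := (LinearMap.trace_conj' f e.symm).symm
    _ = _ := by rw [he, trace_prodMap']

/-- Restriction of a representation to an invariant subspace. -/
def subRep (ρ : Representation ℂ G M) (p : Submodule ℂ M)
    (hp : ∀ g, ∀ x ∈ p, ρ g x ∈ p) : Representation ℂ G p where
  toFun g := (ρ g).restrict (hp g)
  map_one' := by ext x; simp [LinearMap.restrict_apply]
  map_mul' g h := by ext x; simp [LinearMap.restrict_apply]

@[simp] lemma subRep_apply (ρ : Representation ℂ G M) (p : Submodule ℂ M)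
    (hp : ∀ g, ∀ x ∈ p, ρ g x ∈ p) (g : G) (x : p) :
    (subRep ρ p hp g x : M) = ρ g (x : M) := rfl

lemma rho_rho (ρ : Representation ℂ G M) (a b : G) (x : M) :
    ρ a (ρ b x) = ρ (a * b) x := by
  rw [← Module.End.mul_apply, ← map_mul]

lemma exists_invariant_compl (ρ : Representation ℂ G M) (p : Submodule ℂ M)
    (hp : ∀ g, ∀ x ∈ p, ρ g x ∈ p) :
    ∃ q : Submodule ℂ M, IsCompl p q ∧ ∀ g, ∀ x ∈ q, ρ g x ∈ q := by
  obtain ⟨q₀, hq₀⟩ := Submodule.exists_isCompl p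
  set π := Submodule.linearProjOfIsCompl p q₀ hq₀ with hπ
  have hcard : (Fintype.card G : ℂ) ≠ 0 := by exact_mod_cast Fintype.card_ne_zero
  set σ : M →ₗ[ℂ] M :=
    (Fintype.card G : ℂ)⁻¹ • ∑ g : G, (ρ g) ∘ₗ (p.subtype ∘ₗ π) ∘ₗ (ρ g⁻¹) with hσ
  have hσapp : ∀ x, σ x = (Fintype.card G : ℂ)⁻¹ • ∑ g : G, ρ g (π (ρ g⁻¹ x) : M) := by
    intro x; simp [hσ, LinearMap.sum_apply]
  have hσmem : ∀ x, σ x ∈ p := by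
    intro x
    rw [hσapp]
    exact Submodule.smul_mem _ _ (Submodule.sum_mem _ fun g _ => hp g _ (π (ρ g⁻¹ x)).2)
  have hσp : ∀ x ∈ p, σ x = x := by
    intro x hx
    rw [hσapp]
    have key : ∀ g : G, ρ g ((π (ρ g⁻¹ x)) : M) = x := by
      intro g
      have h1 : ρ g⁻¹ x ∈ p := hp g⁻¹ x hx
      have h2 : (π (ρ g⁻¹ x) : M) = ρ g⁻¹ x := by
        have := Submodule.linearProjOfIsCompl_apply_left hq₀ ⟨ρ g⁻¹ x, h1⟩
        exact congrArg (Subtype.val) this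
      rw [h2, rho_rho, mul_inv_cancel, map_one, Module.End.one_apply]
    rw [Finset.sum_congr rfl fun g _ => key g]
    rw [Finset.sum_const, Finset.card_univ, ← Nat.cast_smul_eq_nsmul ℂ, smul_smul,
      inv_mul_cancel₀ hcard, one_smul]
  have hσcomm : ∀ h : G, ∀ x, σ (ρ h x) = ρ h (σ x) := by
    intro h x
    simp only [hσapp, map_smul, map_sum]
    refine congrArg _ ?_
    refine Fintype.sum_bijective (fun g => h⁻¹ * g) (Group.mulLeft_bijective h⁻¹) _ _ fun g => ?_
    show (ρ g) ↑(π ((ρ g⁻¹) ((ρ h) x))) = (ρ h) ((ρ (h⁻¹ * g)) ↑(π ((ρ (h⁻¹ * g)⁻¹) x)))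
    rw [rho_rho ρ h, mul_inv_cancel_left, rho_rho ρ g⁻¹, mul_inv_rev, inv_inv]
  refine ⟨LinearMap.ker (σ.codRestrict p hσmem), ?_, ?_⟩
  · apply LinearMap.isCompl_of_proj
    intro x
    apply Subtype.ext
    simpa [LinearMap.codRestrict_apply] using hσp x x.2
  · intro g x hx
    simp only [LinearMap.mem_ker] at hx ⊢
    have hx' : σ x = 0 := by simpa using congrArg Subtype.val hx
    apply Subtype.ext
    simp [LinearMap.codRestrict_apply, hσcomm g x, hx']



lemma fdrep_hom_comm {Y X : FDRep ℂ G} (f : Y ⟶ X) (g : G) (y : Y) :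
    f.hom (Y.ρ g y) = X.ρ g (f.hom y) :=
  congrFun (congrArg (fun (u : Y.V ⟶ X.V) => (u : Y → X)) (f.comm g)) y

lemma fdrep_hom_ext {Y X : FDRep ℂ G} {f g : Y ⟶ X} (h : ∀ y : Y, f.hom y = g.hom y) :
    f = g := Action.Hom.ext (by ext y; exact h y)

lemma fdrep_zero_hom_apply {Y X : FDRep ℂ G} (y : Y) : (0 : Y ⟶ X).hom y = (0 : X) := by
  rw [Action.zero_hom]; rfl

lemma fdrep_comp_hom_apply {Y X Z : FDRep ℂ G} (f : Y ⟶ X) (g : X ⟶ Z) (y : Y) :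
    (f ≫ g).hom y = g.hom (f.hom y) := rfl


lemma simple_of_no_invariant (ρ : Representation ℂ G M) (hnt : Nontrivial M)
    (hirr : ∀ p : Submodule ℂ M, (∀ g, ∀ x ∈ p, ρ g x ∈ p) → p = ⊥ ∨ p = ⊤) :
    Simple (FDRep.of ρ) := by
  constructor
  intro Y f hmono
  constructor
  · intro hiso hf0
    have h1 : 𝟙 (FDRep.of ρ) = 0 := by
      calc 𝟙 (FDRep.of ρ) = inv f ≫ f := (IsIso.inv_hom_id f).symm
        _ = inv f ≫ 0 := congrArg _ hf0
        _ = 0 := Limits.comp_zero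
    obtain ⟨x, y, hxy⟩ := hnt
    apply hxy
    have hx : x = (𝟙 (FDRep.of ρ) : _ ⟶ _).hom x := rfl
    have hy : y = (𝟙 (FDRep.of ρ) : _ ⟶ _).hom y := rfl
    rw [h1, fdrep_zero_hom_apply] at hx hy
    rw [hx, hy]
  · intro hf0
    set φ : (Y : Type) →ₗ[ℂ] M := (ConcreteCategory.hom f.hom : Y →ₗ[ℂ] M) with hφ
    have hφcomm : ∀ g y, φ (Y.ρ g y) = ρ g (φ y) := fun g y => fdrep_hom_comm f g y
    have hker : LinearMap.ker φ = ⊥ := by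
      by_contra hK
      set K := LinearMap.ker φ with hKdef
      have hKinv : ∀ g, ∀ x ∈ K, Y.ρ g x ∈ K := by
        intro g x hx
        have hx' : φ x = 0 := LinearMap.mem_ker.mp hx
        exact LinearMap.mem_ker.mpr (by rw [hφcomm, hx', map_zero])
      let κ : FDRep.of (subRep Y.ρ K hKinv) ⟶ Y :=
        ⟨(ConcreteCategory.ofHom K.subtype : (FDRep.of (subRep Y.ρ K hKinv)).V ⟶ Y.V), fun g => by ext x; rfl⟩
      have hκf : κ ≫ f = 0 := by
        apply fdrep_hom_ext
        intro x
        rw [fdrep_comp_hom_apply, fdrep_zero_hom_apply]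
        exact LinearMap.mem_ker.mp (show (x : Y) ∈ K from x.2)
      have hκ0 : κ = 0 := (Limits.zero_of_comp_mono f) hκf
      apply hK
      ext x
      simp only [Submodule.mem_bot]
      constructor
      · intro hx
        have := congrArg Action.Hom.hom hκ0
        have h2 : K.subtype ⟨x, hx⟩ = (0 : FDRep.of (subRep Y.ρ K hKinv) ⟶ Y).hom ⟨x, hx⟩ :=
          congrFun (congrArg (fun (u : (FDRep.of (subRep Y.ρ K hKinv)).V ⟶ Y.V) =>
            (u : K → Y)) this) ⟨x, hx⟩
        rw [fdrep_zero_hom_apply] at h2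
        simpa using h2
      · intro hx; rw [hx]; exact (LinearMap.ker φ).zero_mem
    have hrange : LinearMap.range φ = ⊤ := by
      rcases hirr (LinearMap.range φ) (by rintro g x ⟨y, rfl⟩; exact ⟨Y.ρ g y, hφcomm g y⟩)
        with h | h
      · exfalso
        apply hf0
        apply fdrep_hom_ext
        intro y
        rw [fdrep_zero_hom_apply]
        have : φ y ∈ LinearMap.range φ := ⟨y, rfl⟩
        rw [h] at this
        simpa using this
      · exact h
    have hbij : Function.Bijective φ :=
      ⟨LinearMap.ker_eq_bot.mp hker, LinearMap.range_eq_top.mp hrange⟩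
    let e := LinearEquiv.ofBijective φ hbij
    let ginv : FDRep.of ρ ⟶ Y := by
      refine ⟨(ConcreteCategory.ofHom (e.symm : M →ₗ[ℂ] Y) : (FDRep.of ρ).V ⟶ Y.V), ?_⟩
      intro g; ext x
      show e.symm (ρ g x) = Y.ρ g (e.symm x)
      apply hbij.1
      show φ _ = φ _
      rw [hφcomm]
      have h1 : φ (e.symm (ρ g x)) = ρ g x := e.apply_symm_apply _
      have h2 : φ (e.symm x) = x := e.apply_symm_apply _
      rw [h1, h2]
    refine ⟨ginv, ?_, ?_⟩
    · apply fdrep_hom_ext; intro y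
      show e.symm (φ y) = y
      exact e.symm_apply_apply y
    · apply fdrep_hom_ext; intro x
      show φ (e.symm x) = x
      exact e.apply_symm_apply x

end Aux

section Two
variable {G : Type} [Group G] [Fintype G] {ι : Type*} [Fintype ι]

/-- inner product of a function with the character of `V T` -/
noncomputable def ip (V : ι → FDRep ℂ G) (f : G → ℂ) (T : ι) : ℂ :=
  (Fintype.card G : ℂ)⁻¹ * ∑ g : G, f g * (V T).character g⁻¹

lemma ip_add (V : ι → FDRep ℂ G) (f₁ f₂ : G → ℂ) (T : ι) :
    ip V (fun g => f₁ g + f₂ g) T = ip V f₁ T + ip V f₂ T := by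
  simp only [ip, add_mul, Finset.sum_add_distrib, mul_add]

lemma ortho (V : ι → FDRep ℂ G) (hsimple : ∀ i, Simple (V i))
    (hdistinct : ∀ i j, i ≠ j → IsEmpty (V i ≅ V j)) (i j : ι) :
    ip V ((V i).character) j = if i = j then 1 else 0 := by
  haveI := hsimple i; haveI := hsimple j
  have hcard : ((Fintype.card G : ℂ)) ≠ 0 := by exact_mod_cast Fintype.card_ne_zero
  letI I' : Invertible ((Nat.card G) : ℂ) :=
    invertibleOfNonzero (by rwa [Nat.card_eq_fintype_card])
  have h := FDRep.char_orthonormal (k := ℂ) (G := G) (V i) (V j)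
  rw [Nat.card_eq_fintype_card] at h
  have hif : (if Nonempty (V i ≅ V j) then (1 : ℂ) else (0 : ℂ))
      = if i = j then 1 else 0 := by
    by_cases hij : i = j
    · subst hij; rw [if_pos ⟨Iso.refl _⟩, if_pos rfl]
    · rw [if_neg (not_nonempty_iff.mpr (hdistinct i j hij)), if_neg hij]
  exact h.trans hif

end Two

section Three
variable {G : Type} [Group G] [Fintype G] {ι : Type*} [Fintype ι]

lemma charExpand (V : ι → FDRep ℂ G) (hsimple : ∀ i, Simple (V i))
    (hdistinct : ∀ i j, i ≠ j → IsEmpty (V i ≅ V j))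
    (hcomplete : ∀ W : FDRep ℂ G, Simple W → ∃ i, Nonempty (W ≅ V i)) :
    ∀ (n : ℕ) (M : Type) [AddCommGroup M] [Module ℂ M] [FiniteDimensional ℂ M]
      (ρ : Representation ℂ G M), finrank ℂ M ≤ n →
      ∀ g, trace ℂ M (ρ g) = ∑ T, ip V (fun h => trace ℂ M (ρ h)) T * (V T).character g := by
  intro n
  induction n with
  | zero =>
    intro M _ _ _ ρ hle g
    haveI hss : Subsingleton M := by
      rw [← Module.finrank_zero_iff (R := ℂ)]; omega
    have hz : ∀ h : G, trace ℂ M (ρ h) = 0 := fun h => by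
      rw [Subsingleton.elim (ρ h) 0, map_zero]
    rw [hz]
    have hT : ∀ T, ip V (fun h => trace ℂ M (ρ h)) T = 0 := by intro T; simp [ip, hz]
    simp [hT]
  | succ n ih =>
    intro M _ _ _ ρ hle g
    by_cases hss : Subsingleton M
    · have hz : ∀ h : G, trace ℂ M (ρ h) = 0 := fun h => by
        rw [Subsingleton.elim (ρ h) 0, map_zero]
      rw [hz]
      have hT : ∀ T, ip V (fun h => trace ℂ M (ρ h)) T = 0 := by intro T; simp [ip, hz]
      simp [hT]
    · haveI hnt : Nontrivial M := not_subsingleton_iff_nontrivial.mp hss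
      by_cases hex : ∃ p : Submodule ℂ M, (∀ g, ∀ x ∈ p, ρ g x ∈ p) ∧ p ≠ ⊥ ∧ p ≠ ⊤
      · obtain ⟨p, hpinv, hpbot, hptop⟩ := hex
        obtain ⟨q, hcompl, hqinv⟩ := exists_invariant_compl ρ p hpinv
        have hdecomp : ∀ h : G, trace ℂ M (ρ h)
            = trace ℂ p (subRep ρ p hpinv h) + trace ℂ q (subRep ρ q hqinv h) :=
          fun h => trace_decomp hcompl (ρ h) (hpinv h) (hqinv h)
        have hsum : finrank ℂ p + finrank ℂ q = finrank ℂ M :=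
          Submodule.finrank_add_eq_of_isCompl hcompl
        have hppos : finrank ℂ p ≠ 0 := fun h => hpbot (Submodule.finrank_eq_zero.mp h)
        have hqpos : finrank ℂ q ≠ 0 := by
          intro h
          have hqb : q = ⊥ := Submodule.finrank_eq_zero.mp h
          rw [hqb] at hcompl
          exact hptop (by simpa using hcompl.sup_eq_top)
        have h1 : finrank ℂ p ≤ n := by omega
        have h2 : finrank ℂ q ≤ n := by omega
        have ihp := ih p (subRep ρ p hpinv) h1
        have ihq := ih q (subRep ρ q hqinv) h2
        rw [hdecomp g, ihp g, ihq g, ← Finset.sum_add_distrib]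
        refine Finset.sum_congr rfl fun T _ => ?_
        rw [show (fun h : G => trace ℂ M (ρ h))
            = (fun h : G => trace ℂ p (subRep ρ p hpinv h) + trace ℂ q (subRep ρ q hqinv h))
            from funext hdecomp, ip_add, add_mul]
      · have hirr : ∀ p : Submodule ℂ M, (∀ g, ∀ x ∈ p, ρ g x ∈ p) → p = ⊥ ∨ p = ⊤ := by
          intro p hp
          by_cases hb : p = ⊥
          · exact Or.inl hb
          · right; by_contra ht; exact hex ⟨p, hp, hb, ht⟩
        haveI hS := simple_of_no_invariant ρ hnt hirr
        obtain ⟨i, ⟨iso⟩⟩ := hcomplete (FDRep.of ρ) hS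
        have hchar : ∀ h : G, trace ℂ M (ρ h) = (V i).character h :=
          fun h => congrFun (FDRep.char_iso iso) h
        rw [hchar g]
        rw [show (fun h : G => trace ℂ M (ρ h)) = (V i).character from funext hchar]
        simp [ortho V hsimple hdistinct i, ite_mul]

end Three

section SW
variable {X : Type} [Fintype X]

lemma span_products {l : ℕ} (F : Fin l → X → ℂ)
    (hsep : Function.Injective fun (x : X) => fun j => F j x) :
    Submodule.span ℂ {f : X → ℂ | ∃ L : List (Fin l), f = (L.map F).prod} = ⊤ := by
  set s : Set (X → ℂ) := {f : X → ℂ | ∃ L : List (Fin l), f = (L.map F).prod} with hs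
  set P := Submodule.span ℂ s with hP
  have hone : (1 : X → ℂ) ∈ P := Submodule.subset_span ⟨[], by simp⟩
  have hmulF : ∀ (j : Fin l) (f : X → ℂ), f ∈ P → F j * f ∈ P := by
    intro j f hf
    refine Submodule.span_induction ?_ ?_ ?_ ?_ hf
    · rintro x ⟨L, rfl⟩
      exact Submodule.subset_span ⟨j :: L, by simp⟩
    · rw [mul_zero]; exact P.zero_mem
    · intro a b _ _ ha hb; rw [mul_add]; exact P.add_mem ha hb
    · intro c a _ ha; rw [mul_smul_comm]; exact P.smul_mem c ha
  have hind : ∀ x₀ : X, ∃ h : X → ℂ, h ∈ P ∧ h x₀ ≠ 0 ∧ ∀ y, y ≠ x₀ → h y = 0 := by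
    intro x₀
    have hj : ∀ y : X, y ≠ x₀ → ∃ j, F j y ≠ F j x₀ := by
      intro y hy
      by_contra hc
      push_neg at hc
      exact hy (hsep (funext fun j => hc j))
    choose j hjspec using hj
    set gf : (y : X) → y ≠ x₀ → (X → ℂ) :=
      fun y hy => (fun z => F (j y hy) z - F (j y hy) y) with hgf
    set h : X → ℂ := ∏ y ∈ Finset.univ.erase x₀, (if hy : y ≠ x₀ then gf y hy else 1) with hh
    have hmem : ∀ t : Finset X, (∏ y ∈ t, (if hy : y ≠ x₀ then gf y hy else 1)) ∈ P := by
      intro t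
      induction t using Finset.induction with
      | empty => simpa using hone
      | @insert a t' hx ih =>
        rw [Finset.prod_insert hx]
        by_cases ha : a ≠ x₀
        · rw [dif_pos ha]
          have : gf a ha * (∏ y ∈ t', (if hy : y ≠ x₀ then gf y hy else 1))
              = F (j a ha) * (∏ y ∈ t', (if hy : y ≠ x₀ then gf y hy else 1))
                - (F (j a ha) a) • (∏ y ∈ t', (if hy : y ≠ x₀ then gf y hy else 1)) := by
            funext z
            simp [hgf, sub_mul, Finset.prod_apply]
          rw [this]
          exact P.sub_mem (hmulF _ _ ih) (P.smul_mem _ ih)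
        · rw [dif_neg ha, one_mul]; exact ih
    refine ⟨h, hmem _, ?_, ?_⟩
    · rw [hh, Finset.prod_apply]
      apply Finset.prod_ne_zero_iff.mpr
      intro y hy
      have hy' : y ≠ x₀ := Finset.ne_of_mem_erase hy
      rw [dif_pos hy']
      exact sub_ne_zero.mpr (Ne.symm (hjspec y hy'))
    · intro y hy
      rw [hh, Finset.prod_apply]
      apply Finset.prod_eq_zero (Finset.mem_erase.mpr ⟨hy, Finset.mem_univ y⟩)
      rw [dif_pos hy]
      simp [hgf]
  rw [eq_top_iff]
  intro f _
  choose h hmem hne hzero using hind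
  have hf : f = ∑ x₀ : X, (f x₀ * (h x₀ x₀)⁻¹) • h x₀ := by
    funext y
    rw [Finset.sum_apply]
    rw [Finset.sum_eq_single y]
    · simp only [Pi.smul_apply, smul_eq_mul]
      field_simp [hne y]
    · intro b _ hb
      simp [hzero b y (by exact fun h' => hb h'.symm)]
    · intro hy; exact absurd (Finset.mem_univ y) hy
  rw [hf]
  exact Submodule.sum_mem _ fun x₀ _ => Submodule.smul_mem _ _ (hmem x₀)
end SW

/-- Let `G` be a finite group and `S 1, …, S l` irreducible representations (chosen from a
complete family `V : ι → FDRep ℂ G` of pairwise non-isomorphic irreducibles, with `i₀` the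
index of the trivial representation).  If the tuples `(χ^{S_1}_C, …, χ^{S_l}_C)` are pairwise
distinct as `C` ranges over the conjugacy classes of `G`, then `a_{S_1}, …, a_{S_l}`
multiplicatively generate the fusion algebra `R(G)`: the monomials in them
(including the empty monomial, the unit `a_{R₀}`) span the whole algebra. -/
theorem fusionBasis_generate_fusion_algebra (G : Type) [Group G] [Fintype G]
    {ι : Type*} [Fintype ι] (V : ι → FDRep ℂ G)
    (hsimple : ∀ i, Simple (V i))
    (hdistinct : ∀ i j, i ≠ j → IsEmpty (V i ≅ V j))
    (hcomplete : ∀ W : FDRep ℂ G, Simple W → ∃ i, Nonempty (W ≅ V i))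
    (i₀ : ι) (htriv : ∀ g : G, (V i₀).character g = 1)
    {l : ℕ} (S : Fin l → ι)
    (hdist : Function.Injective fun C : ConjClasses G => fun j : Fin l => chiC (V (S j)) C) :
    Submodule.span ℂ
      {x : ι → ℂ | ∃ L : List (Fin l),
        x = (L.map fun j => fusBasis (S j)).foldr (fusionMul V) (fusBasis i₀)} = ⊤ := by
  classical
  let F : Fin l → ConjClasses G → ℂ := fun j => fun C : ConjClasses G => chiC (V (S j)) C
  let Φ : (ι → ℂ) →ₗ[ℂ] (ConjClasses G → ℂ) :=
    { toFun := fun x => fun C : ConjClasses G => ∑ R, x R * chiC (V R) C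
      map_add' := by
        intro a b; funext C; simp [add_mul, Finset.sum_add_distrib]
      map_smul' := by
        intro c a; funext C; simp [Finset.mul_sum, mul_assoc] }
  have hΦapp : ∀ (x : ι → ℂ) (C : ConjClasses G), Φ x C = ∑ R, x R * chiC (V R) C :=
    fun x C => rfl
  have hchiC : ∀ (W : FDRep ℂ G) (C : ConjClasses G), chiC W C = W.character (Quotient.out C) :=
    fun W C => rfl
  have hclass : ∀ (W : FDRep ℂ G) (g : G), chiC W (ConjClasses.mk g) = W.character g := by
    intro W g
    have h1 : ConjClasses.mk (Quotient.out (ConjClasses.mk g)) = ConjClasses.mk g :=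
      Quotient.out_eq _
    have h2 : IsConj g (Quotient.out (ConjClasses.mk g)) :=
      ConjClasses.mk_eq_mk_iff_isConj.mp h1.symm
    obtain ⟨c, hc⟩ := isConj_iff.mp h2
    rw [hchiC, ← hc, FDRep.char_conj]
  have hcard : ((Fintype.card G : ℂ)) ≠ 0 := by exact_mod_cast Fintype.card_ne_zero
  -- injectivity of Φ
  have hinj : ∀ x : ι → ℂ, Φ x = 0 → x = 0 := by
    intro x hx
    have hg : ∀ g : G, ∑ R, x R * (V R).character g = 0 := by
      intro g
      have h := congrFun hx (ConjClasses.mk g)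
      rw [hΦapp] at h
      calc ∑ R, x R * (V R).character g
          = ∑ R, x R * chiC (V R) (ConjClasses.mk g) :=
            Finset.sum_congr rfl fun R _ => by rw [hclass]
        _ = 0 := by rw [h]; rfl
    funext j
    have e1 : x j = ∑ R, x R * ip V ((V R).character) j := by
      rw [Finset.sum_congr rfl fun R (_ : R ∈ Finset.univ) => by
        rw [ortho V hsimple hdistinct R j]]
      simp [Finset.sum_ite_eq, mul_comm]
    have e2 : ∑ R, x R * ip V ((V R).character) j
        = (Fintype.card G : ℂ)⁻¹ * ∑ g : G, (∑ R, x R * (V R).character g)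
            * (V j).character g⁻¹ := by
      unfold ip
      calc ∑ R, x R * ((Fintype.card G : ℂ)⁻¹ * ∑ g : G, (V R).character g * (V j).character g⁻¹)
          = ∑ R, ∑ g : G, (Fintype.card G : ℂ)⁻¹
              * (x R * ((V R).character g * (V j).character g⁻¹)) := by
            refine Finset.sum_congr rfl fun R _ => ?_
            rw [Finset.mul_sum, Finset.mul_sum]
            exact Finset.sum_congr rfl fun g _ => by ring
        _ = ∑ g : G, ∑ R, (Fintype.card G : ℂ)⁻¹
              * (x R * ((V R).character g * (V j).character g⁻¹)) := Finset.sum_comm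
        _ = (Fintype.card G : ℂ)⁻¹ * ∑ g : G, (∑ R, x R * (V R).character g)
              * (V j).character g⁻¹ := by
            rw [Finset.mul_sum]
            refine Finset.sum_congr rfl fun g _ => ?_
            rw [Finset.sum_mul, Finset.mul_sum]
            exact Finset.sum_congr rfl fun R _ => by ring
    rw [e1, e2]
    simp [hg]
  -- key identity from character expansion
  have hkey : ∀ (R S' : ι) (c : G),
      ∑ T, fusionN (V R) (V S') (V T) * (V T).character c
        = (V R).character c * (V S').character c := by
    intro R S' c
    let W : FDRep ℂ G := V R ⊗ V S'
    have hWchar : ∀ h : G, LinearMap.trace ℂ W (W.ρ h)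
        = (V R).character h * (V S').character h := by
      intro h
      have := congrFun (FDRep.char_tensor (V R) (V S')) h
      exact this
    have hexp := charExpand V hsimple hdistinct hcomplete (Module.finrank ℂ W) W W.ρ le_rfl c
    have hN : ∀ T, fusionN (V R) (V S') (V T)
        = ip V (fun h => LinearMap.trace ℂ W (W.ρ h)) T := by
      intro T
      unfold fusionN ip
      congr 1
      refine Finset.sum_congr rfl fun g _ => ?_
      simp only [hWchar]
    rw [Finset.sum_congr rfl fun T _ => by rw [hN T]]
    rw [← hexp, hWchar c]
  -- multiplicativity of evaluation
  have hmul : ∀ (x y : ι → ℂ) (C : ConjClasses G),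
      Φ (fusionMul V x y) C = Φ x C * Φ y C := by
    intro x y C
    have e1 : Φ (fusionMul V x y) C
        = ∑ R, ∑ S', (x R * y S')
            * (∑ T, fusionN (V R) (V S') (V T) * (V T).character (Quotient.out C)) := by
      rw [hΦapp]
      calc ∑ T, fusionMul V x y T * chiC (V T) C
          = ∑ T, ∑ R, ∑ S', x R * y S' * fusionN (V R) (V S') (V T)
              * (V T).character (Quotient.out C) := by
            refine Finset.sum_congr rfl fun T _ => ?_
            rw [hchiC, show fusionMul V x y T = ∑ R, ∑ S', x R * y S' * fusionN (V R) (V S') (V T) from rfl,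
              Finset.sum_mul]
            exact Finset.sum_congr rfl fun R _ => by rw [Finset.sum_mul]
        _ = ∑ R, ∑ T, ∑ S', x R * y S' * fusionN (V R) (V S') (V T)
              * (V T).character (Quotient.out C) := Finset.sum_comm
        _ = ∑ R, ∑ S', ∑ T, x R * y S' * fusionN (V R) (V S') (V T)
              * (V T).character (Quotient.out C) :=
            Finset.sum_congr rfl fun R _ => Finset.sum_comm
        _ = _ := by
            refine Finset.sum_congr rfl fun R _ => Finset.sum_congr rfl fun S' _ => ?_
            rw [Finset.mul_sum]
            exact Finset.sum_congr rfl fun T _ => by ring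
    rw [e1]
    rw [Finset.sum_congr rfl fun R (_ : R ∈ Finset.univ) => Finset.sum_congr rfl
      fun S' (_ : S' ∈ Finset.univ) => by rw [hkey R S' (Quotient.out C)]]
    rw [hΦapp, hΦapp, Finset.sum_mul_sum]
    refine Finset.sum_congr rfl fun R _ => Finset.sum_congr rfl fun S' _ => ?_
    rw [hchiC, hchiC]
    ring
  -- monomials
  have hbasis : ∀ R : ι, Φ (fusBasis R) = fun C => chiC (V R) C := by
    intro R
    funext C
    rw [hΦapp]
    simp [fusBasis, ite_mul, Finset.sum_ite_eq']
  have hmono : ∀ L : List (Fin l),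
      Φ ((L.map fun j => fusBasis (S j)).foldr (fusionMul V) (fusBasis i₀))
        = (L.map F).prod := by
    intro L
    induction L with
    | nil =>
      simp only [List.map_nil, List.foldr_nil, List.prod_nil]
      rw [hbasis i₀]
      funext C
      show chiC (V i₀) C = 1
      rw [hchiC]
      exact htriv _
    | cons j L ihL =>
      simp only [List.map_cons, List.foldr_cons, List.prod_cons]
      funext C
      rw [show ((L.map fun j => fusBasis (S j)).foldr (fusionMul V) (fusBasis i₀)) =
        ((L.map fun j => fusBasis (S j)).foldr (fusionMul V) (fusBasis i₀)) from rfl]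
      rw [hmul]
      rw [hbasis (S j), ihL]
      rfl
  -- conclusion
  have hspan := span_products (X := ConjClasses G) F hdist
  rw [eq_top_iff]
  rintro x -
  have h1 : Φ x ∈ Submodule.span ℂ {f : ConjClasses G → ℂ | ∃ L : List (Fin l), f = (L.map F).prod} := by
    rw [hspan]; trivial
  have h2 : Submodule.span ℂ {f : ConjClasses G → ℂ | ∃ L : List (Fin l), f = (L.map F).prod}
      ≤ Submodule.map Φ (Submodule.span ℂ
        {x : ι → ℂ | ∃ L : List (Fin l),
          x = (L.map fun j => fusBasis (S j)).foldr (fusionMul V) (fusBasis i₀)}) := by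
    rw [Submodule.span_le]
    rintro f ⟨L, rfl⟩
    exact ⟨(L.map fun j => fusBasis (S j)).foldr (fusionMul V) (fusBasis i₀),
      Submodule.subset_span ⟨L, rfl⟩, hmono L⟩
  obtain ⟨y, hy, hyx⟩ := h2 h1
  have hyx' : y = x := by
    have h0 := hinj (y - x) (by rw [map_sub, hyx, sub_self])
    exact sub_eq_zero.mp h0
  rw [← hyx']
  exact hy
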